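/- arXiv:2511.07101 — 2 statements merged into one kernel-verified Lean document; each statement's English description precedes it below -/
import Mathlib

section
/- The quotient of the free abelian group Z^5 on generators s1, s2, s3, s4, s5 by the subgroup generated by the elements s4, s5, s1 + s3, and s1 - s2 - s3 is isomorphic to Z (infinite cyclic), generated by the image of s3. -/
open AddSubgroup

/-- The auxiliary functional `f ↦ -f 0 - 2 f 1 + f 2`. -/
def stmt0φ : (Fin 5 → ℤ) →+ ℤ where
  toFun f := -f 0 - 2 * f 1 + f 2
  map_zero' := by simp
  map_add' f g := by simp [Pi.add_apply]; ring

/-- The C-localized Burnside group `Burn_3^C(ℤ/2)` for hyperelliptic `C` of genus ≥ 2: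
the quotient of the free abelian group ℤ^5 on generators `s1,…,s5` (indexed `0,…,4`)
by the relations `s4 = s5 = 0`, `s1 + s3 = 0`, `s1 - s2 - s3 = 0` is infinite cyclic,
generated by the image of `s3`. -/
theorem stmt0 :
    ∃ e : ((Fin 5 → ℤ) ⧸ (AddSubgroup.closure
        {Pi.single 3 1, Pi.single 4 1,
         Pi.single 0 1 + Pi.single 2 1,
         Pi.single 0 1 - Pi.single 1 1 - Pi.single 2 1} : AddSubgroup (Fin 5 → ℤ))) ≃+ ℤ,
      e (QuotientAddGroup.mk (Pi.single 2 1)) = 1 := by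
  set S : Set (Fin 5 → ℤ) :=
    {Pi.single 3 1, Pi.single 4 1,
     Pi.single 0 1 + Pi.single 2 1,
     Pi.single 0 1 - Pi.single 1 1 - Pi.single 2 1} with hS
  have hker : AddSubgroup.closure S ≤ stmt0φ.ker := by
    rw [AddSubgroup.closure_le]
    rintro x (rfl | rfl | rfl | rfl) <;>
      simp [stmt0φ, AddMonoidHom.mem_ker, Pi.single_apply]
  set ψ := QuotientAddGroup.lift (AddSubgroup.closure S) stmt0φ hker with hψ
  have hmem : ∀ f : Fin 5 → ℤ, -f + stmt0φ f • Pi.single 2 1 ∈ AddSubgroup.closure S := by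
    intro f
    have h : -f + stmt0φ f • Pi.single 2 1 =
        (-f 0 - f 1) • (Pi.single 0 1 + Pi.single 2 1)
        + (f 1) • (Pi.single 0 1 - Pi.single 1 1 - Pi.single 2 1)
        + (-f 3) • (Pi.single 3 (1:ℤ)) + (-f 4) • (Pi.single 4 (1:ℤ)) := by
      funext i
      fin_cases i <;>
        simp [stmt0φ, Pi.single_apply] <;> ring
    rw [h]
    refine add_mem (add_mem (add_mem ?_ ?_) ?_) ?_ <;>
      refine zsmul_mem (subset_closure ?_) _ <;> simp [hS]
  refine ⟨{ toFun := ψ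
            invFun := fun n => n • QuotientAddGroup.mk (Pi.single 2 1)
            left_inv := ?_
            right_inv := ?_
            map_add' := ψ.map_add }, ?_⟩
  · intro q
    induction q using QuotientAddGroup.induction_on with
    | H f =>
      have : ψ (QuotientAddGroup.mk f) = stmt0φ f := rfl
      show stmt0φ f • (QuotientAddGroup.mk (Pi.single 2 1) :
          (Fin 5 → ℤ) ⧸ AddSubgroup.closure S) = QuotientAddGroup.mk f
      rw [← QuotientAddGroup.mk_zsmul]
      exact (QuotientAddGroup.eq.mpr (hmem f)).symm
  · intro n
    have : ψ (n • QuotientAddGroup.mk (Pi.single 2 1)) = n • ψ (QuotientAddGroup.mk (Pi.single 2 1)) := map_zsmul ψ n _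
    rw [this]
    have h2 : ψ (QuotientAddGroup.mk (Pi.single 2 1)) = 1 := by
      show stmt0φ (Pi.single 2 1) = 1
      simp [stmt0φ, Pi.single_apply]
    rw [h2]; simp
  · show stmt0φ (Pi.single 2 1) = 1
    simp [stmt0φ, Pi.single_apply]
end

section
/- Let H be a finite abelian group and b1, b2 characters of H generating the dual group. Set K = ker(b1 - b2) (the subgroup of H on which b1 and b2 agree). Then the restriction b1|_K generates the dual group of K; in particular K is cyclic. -/
open Subgroup

lemma card_dual (G : Type*) [CommGroup G] [Finite G] :
    Nat.card (G →* ℂˣ) = Nat.card G := by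
  have h := Monoid.exponent_pos (G := G) |>.mpr Monoid.ExponentExists.of_finite
  have : NeZero ((Monoid.exponent G : ℕ) : ℂ) :=
    ⟨by exact_mod_cast Nat.cast_ne_zero.mpr h.ne'⟩
  exact Nat.card_congr (CommGroup.monoidHom_mulEquiv_of_hasEnoughRootsOfUnity G ℂ).some.toEquiv

lemma restrict_surjective (H : Type*) [CommGroup H] [Fintype H] (K : Subgroup H) :
    Function.Surjective (MonoidHom.compHom' (P := ℂˣ) K.subtype) := by
  set r := MonoidHom.compHom' (P := ℂˣ) K.subtype with hrdef
  have hr : ∀ g : H →* ℂˣ, r g = g.comp K.subtype := fun g => rfl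
  have hfin : Finite (H →* ℂˣ) := Nat.finite_of_card_ne_zero (by
    rw [card_dual]; exact Nat.card_pos.ne')
  have hfinK : Finite (K →* ℂˣ) := Nat.finite_of_card_ne_zero (by
    rw [card_dual]; exact Nat.card_pos.ne')
  have hker : Nat.card r.ker = Nat.card (H ⧸ K →* ℂˣ) := by
    refine Nat.card_congr ?_
    refine Equiv.symm ⟨fun φ => ⟨φ.comp (QuotientGroup.mk' K), ?_⟩, fun φ =>
      QuotientGroup.lift K φ.1 ?_, ?_, ?_⟩
    · rw [MonoidHom.mem_ker, hr]
      refine MonoidHom.ext fun x => ?_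
      have : ((x : H) : H ⧸ K) = 1 := (QuotientGroup.eq_one_iff _).mpr x.2
      simp [this]
    · intro x hx
      have h1 := DFunLike.congr_fun (MonoidHom.mem_ker.mp φ.2) (⟨x, hx⟩ : K)
      rw [hr] at h1
      simpa using h1
    · intro φ
      ext x
      simp
    · intro φ
      refine Subtype.ext ?_
      ext x
      simp
  have h1 : Nat.card (H →* ℂˣ) = Nat.card ((H →* ℂˣ) ⧸ r.ker) * Nat.card r.ker :=
    Subgroup.card_eq_card_quotient_mul_card_subgroup r.ker
  have h2 : Nat.card ((H →* ℂˣ) ⧸ r.ker) = Nat.card r.range :=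
    Nat.card_congr (QuotientGroup.quotientKerEquivRange r).toEquiv
  have h3 : Nat.card H = Nat.card (H ⧸ K) * Nat.card K :=
    Subgroup.card_eq_card_quotient_mul_card_subgroup K
  have hq : 0 < Nat.card (H ⧸ K) := Nat.card_pos
  have hrange : Nat.card r.range = Nat.card (K →* ℂˣ) := by
    rw [card_dual K]
    rw [card_dual H, hker, card_dual (H ⧸ K), h2, h3, mul_comm (Nat.card (H ⧸ K))] at h1
    exact Nat.eq_of_mul_eq_mul_right hq h1.symm
  have : r.range = ⊤ := Subgroup.eq_top_of_card_eq _ hrange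
  exact MonoidHom.range_eq_top.mp this

/-- If `b1, b2` are characters of a finite abelian group `H` generating the dual group,
and `K = ker(b1 * b2⁻¹)` is the subgroup where `b1` and `b2` agree, then the restriction
`b1|_K` generates the dual group of `K`; in particular `K` is cyclic. -/
theorem stmt7 (H : Type*) [CommGroup H] [Fintype H]
    (b1 b2 : H →* ℂˣ)
    (hgen : Subgroup.closure {b1, b2} = (⊤ : Subgroup (H →* ℂˣ))) :
    Subgroup.closure {b1.comp (b1 * b2⁻¹).ker.subtype}
      = (⊤ : Subgroup ((b1 * b2⁻¹).ker →* ℂˣ)) ∧ IsCyclic (b1 * b2⁻¹).ker := by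
  set K := (b1 * b2⁻¹).ker with hK
  set r := MonoidHom.compHom' (P := ℂˣ) K.subtype with hrdef
  have hr : ∀ g : H →* ℂˣ, r g = g.comp K.subtype := fun g => rfl
  have hsurj := restrict_surjective H K
  have heq : r b2 = r b1 := by
    rw [hr, hr]
    refine MonoidHom.ext fun x => ?_
    have hx : b1 (x : H) * (b2 (x : H))⁻¹ = 1 := x.2
    rw [mul_inv_eq_one] at hx
    simpa using hx.symm
  have himg : r '' {b1, b2} = {b1.comp K.subtype} := by
    rw [Set.image_pair, heq, Set.pair_eq_singleton, hr]
  have htop : Subgroup.closure {b1.comp K.subtype} = (⊤ : Subgroup (K →* ℂˣ)) := by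
    rw [← himg, ← MonoidHom.map_closure, hgen, ← MonoidHom.range_eq_map,
      MonoidHom.range_eq_top.mpr hsurj]
  refine ⟨htop, ?_⟩
  have hcyc : IsCyclic (K →* ℂˣ) := by
    refine ⟨⟨b1.comp K.subtype, fun y => ?_⟩⟩
    show y ∈ Subgroup.zpowers (b1.comp K.subtype)
    rw [Subgroup.zpowers_eq_closure, htop]
    trivial
  have h := Monoid.exponent_pos (G := K) |>.mpr Monoid.ExponentExists.of_finite
  have : NeZero ((Monoid.exponent K : ℕ) : ℂ) :=
    ⟨by exact_mod_cast Nat.cast_ne_zero.mpr h.ne'⟩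
  have e := (CommGroup.monoidHom_mulEquiv_of_hasEnoughRootsOfUnity K ℂ).some
  exact isCyclic_of_surjective e e.surjective
end
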